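/- Let 𝔤 be a Lie algebra over a field k and r ∈ 𝔤 ⊗ 𝔤 an element satisfying the classical Yang–Baxter equation [r₁₂,r₁₃] + [r₁₂,r₂₃] + [r₁₃,r₂₃] = 0 and such that r + σ(r) is ad-invariant (σ is the flip). Then the linear map r₊ : 𝔤* → 𝔤 defined by r₊(ℓ) = (ℓ ⊗ id)(r) is a Lie algebra homomorphism, where 𝔤* carries the Lie bracket [ℓ,m] = ad*_{r₊(ℓ)}(m) − ad*_{r₋(m)}(ℓ) with r₋(ℓ) = −(id ⊗ ℓ)(r). -/

import Mathlib

open TensorProduct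

/- We represent the element `r ∈ 𝔤 ⊗ 𝔤` by a finite family of decomposables,
`r = ∑ i, a i ⊗ b i`.  Then `r₊(ℓ) = (ℓ ⊗ id)(r) = ∑ i, ℓ(a i) • b i` and
`r₋(ℓ) = -(id ⊗ ℓ)(r) = -∑ i, ℓ(b i) • a i`. -/

/-- The linear map `r₊ : 𝔤* → 𝔤`. -/
noncomputable def rPlus (k : Type*) [Field k] {L : Type*} [LieRing L] [LieAlgebra k L]
    {ι : Type*} [Fintype ι] (a b : ι → L) : Module.Dual k L →ₗ[k] L where
  toFun ℓ := ∑ i, ℓ (a i) • b i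
  map_add' ℓ m := by simp [add_smul, Finset.sum_add_distrib]
  map_smul' c ℓ := by simp [Finset.smul_sum, smul_smul]

/-- The linear map `r₋ : 𝔤* → 𝔤`. -/
noncomputable def rMinus (k : Type*) [Field k] {L : Type*} [LieRing L] [LieAlgebra k L]
    {ι : Type*} [Fintype ι] (a b : ι → L) : Module.Dual k L →ₗ[k] L where
  toFun ℓ := -∑ i, ℓ (b i) • a i
  map_add' ℓ m := by simp [add_smul, Finset.sum_add_distrib]; abel
  map_smul' c ℓ := by simp [Finset.smul_sum, smul_smul]

/-- The coadjoint action `ad*_x(m) = -m ∘ ad_x`, i.e. `(ad*_x m)(y) = -m([x,y])`. -/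
noncomputable def adStar (k : Type*) [Field k] {L : Type*} [LieRing L] [LieAlgebra k L]
    (x : L) (m : Module.Dual k L) : Module.Dual k L :=
  -(m ∘ₗ (LieAlgebra.ad k L x))

/-- The Lie bracket on `𝔤*`: `[ℓ,m] = ad*_{r₊(ℓ)}(m) − ad*_{r₋(m)}(ℓ)`. -/
noncomputable def dualBracket (k : Type*) [Field k] {L : Type*} [LieRing L] [LieAlgebra k L]
    {ι : Type*} [Fintype ι] (a b : ι → L) (ℓ m : Module.Dual k L) : Module.Dual k L :=
  adStar k (rPlus k a b ℓ) m - adStar k (rMinus k a b m) ℓ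

/-- If `r = ∑ i, a i ⊗ b i ∈ 𝔤 ⊗ 𝔤` satisfies the classical
Yang–Baxter equation `[r₁₂,r₁₃] + [r₁₂,r₂₃] + [r₁₃,r₂₃] = 0` and `r + σ(r)` is
ad-invariant, then `r₊ : 𝔤* → 𝔤` is a homomorphism of Lie algebras, where `𝔤*`
carries the bracket `[ℓ,m] = ad*_{r₊(ℓ)}(m) − ad*_{r₋(m)}(ℓ)`. -/
private lemma lie_sum' {L : Type*} [LieRing L] {ι : Type*} (s : Finset ι) (x : L) (f : ι → L) :
    ⁅x, ∑ i ∈ s, f i⁆ = ∑ i ∈ s, ⁅x, f i⁆ :=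
  map_sum (AddMonoidHom.mk' (fun y => ⁅x, y⁆) (lie_add x)) f s

private lemma sum_lie' {L : Type*} [LieRing L] {ι : Type*} (s : Finset ι) (x : L) (f : ι → L) :
    ⁅∑ i ∈ s, f i, x⁆ = ∑ i ∈ s, ⁅f i, x⁆ :=
  map_sum (AddMonoidHom.mk' (fun y => ⁅y, x⁆) (fun y z => add_lie y z x)) f s

theorem rPlus_is_lie_hom (k : Type*) [Field k] {L : Type*} [LieRing L] [LieAlgebra k L]
    [FiniteDimensional k L] {ι : Type*} [Fintype ι] (a b : ι → L)
    (hCYBE : ∑ i, ∑ j,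
        (⁅a i, a j⁆ ⊗ₜ[k] (b i ⊗ₜ[k] b j) + a i ⊗ₜ[k] (⁅b i, a j⁆ ⊗ₜ[k] b j)
          + a i ⊗ₜ[k] (a j ⊗ₜ[k] ⁅b i, b j⁆)) = (0 : L ⊗[k] (L ⊗[k] L)))
    (hinv : ∀ x : L, ∑ i,
        (⁅x, a i⁆ ⊗ₜ[k] b i + a i ⊗ₜ[k] ⁅x, b i⁆
          + ⁅x, b i⁆ ⊗ₜ[k] a i + b i ⊗ₜ[k] ⁅x, a i⁆) = (0 : L ⊗[k] L)) :
    ∀ ℓ m : Module.Dual k L,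
      rPlus k a b (dualBracket k a b ℓ m) = ⁅rPlus k a b ℓ, rPlus k a b m⁆ := by
  intro ℓ m
  have key := congrArg (TensorProduct.lift (ℓ.smulRight (TensorProduct.lift (m.smulRight (LinearMap.id (R := k) (M := L)))))) hCYBE
  simp only [map_sum, map_add, LinearMap.smul_apply, TensorProduct.lift.tmul,
    LinearMap.smulRight_apply, LinearMap.id_apply, map_zero, smul_smul] at key
  simp only [rPlus, dualBracket, adStar, rMinus, LinearMap.coe_mk, AddHom.coe_mk,
    LinearMap.sub_apply, LinearMap.neg_apply, LinearMap.coe_comp, Function.comp_apply,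
    LieAlgebra.ad_apply, map_neg, map_sum, LinearMap.map_smulₛₗ, RingHom.id_apply,
    smul_eq_mul, sub_smul, neg_smul, Finset.sum_sub_distrib, lie_sum', sum_lie', neg_lie, smul_lie,
    lie_smul, map_neg, map_sum, map_smul, neg_neg, smul_neg, Finset.smul_sum, smul_smul] at key ⊢
  simp only [LinearMap.sum_apply, LinearMap.smul_apply, LieAlgebra.ad_apply,
    map_sum, map_smul, smul_eq_mul]
  have key2 : ∑ i, ∑ j, ((ℓ ⁅a i, a j⁆ * m (b i)) • b j + (ℓ (a i) * m ⁅b i, a j⁆) • b j)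
      = -∑ i, ∑ j, (ℓ (a i) * m (a j)) • ⁅b i, b j⁆ := by
    rw [eq_comm, neg_eq_iff_add_eq_zero, ← key]
    simp only [Finset.sum_add_distrib]
    abel
  calc ∑ x : ι, -((∑ x_1 : ι, ℓ (a x_1) * m ⁅b x_1, a x⁆) • b x)
        - ∑ x : ι, (∑ x_1 : ι, m (b x_1) * ℓ ⁅a x_1, a x⁆) • b x
      = -(∑ i, ∑ j, ((ℓ ⁅a i, a j⁆ * m (b i)) • b j + (ℓ (a i) * m ⁅b i, a j⁆) • b j)) := by
        have h1 : ∑ x : ι, -((∑ x_1 : ι, ℓ (a x_1) * m ⁅b x_1, a x⁆) • b x)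
            = -∑ i, ∑ j, (ℓ (a i) * m ⁅b i, a j⁆) • b j := by
          simp only [Finset.sum_smul, ← Finset.sum_neg_distrib]
          rw [Finset.sum_comm]
        have h2 : ∑ x : ι, (∑ x_1 : ι, m (b x_1) * ℓ ⁅a x_1, a x⁆) • b x
            = ∑ i, ∑ j, (ℓ ⁅a i, a j⁆ * m (b i)) • b j := by
          simp only [Finset.sum_smul]
          rw [Finset.sum_comm]
          simp [mul_comm]
        rw [h1, h2]
        simp only [Finset.sum_add_distrib, neg_add]
        abel
    _ = ∑ i, ∑ j, (ℓ (a i) * m (a j)) • ⁅b i, b j⁆ := by rw [key2, neg_neg]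
    _ = ∑ x : ι, ∑ x_1 : ι, (m (a x) * ℓ (a x_1)) • ⁅b x_1, b x⁆ := by
        rw [Finset.sum_comm]
        simp [mul_comm]
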